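/- Suppose N, B, T are positive integers with N ≤ B ≤ T, and suppose there exist a finite field F, positive integers k and n with k ≥ 1, a (k,n) streaming encoder, and a delay-T decoder that together correct every erasure pattern in the channel C_I(N,B). Then the rate R = k/n satisfies R·B + (1−R)·N ≤ (1−R)·(T+1); equivalently, since R < 1, (R/(1−R))·B + N ≤ T+1. -/
import Mathlib


open scoped Classical

/-- A `(k,n)` streaming encoder over `F`: at each time `i` it maps the source symbols
`s[0], …, s[i]` to a channel symbol in `Fⁿ`. -/
def Encoder (F : Type) (k n : ℕ) : Type :=
  (i : ℕ) → (Fin (i + 1) → (Fin k → F)) → (Fin n → F)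

/-- The channel input `x[i]` produced by the encoder `f` from the source sequence `s`. -/
def chInput {F : Type} {k n : ℕ} (f : Encoder F k n) (s : ℕ → Fin k → F) (i : ℕ) :
    Fin n → F :=
  f i (fun t => s t)

/-- The channel output under erasure pattern `E`: `none` (the erasure symbol `⋆`) at erased
positions, `some x[i]` otherwise. -/
noncomputable def chOutput {F : Type} {k n : ℕ} (f : Encoder F k n) (E : Set ℕ)
    (s : ℕ → Fin k → F) (i : ℕ) : Option (Fin n → F) :=
  if i ∈ E then none else some (chInput f s i)

/-- A delay-`T` decoder family: at time `i + T` it maps `y[0], …, y[i+T]` to a source symbol. -/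
def Decoder (F : Type) (k n T : ℕ) : Type :=
  (i : ℕ) → (Fin (i + T + 1) → Option (Fin n → F)) → (Fin k → F)

/-- The code `(f, g)` corrects the erasure pattern `E` with delay `T`: for every source
sequence, each `s[i]` is reproduced from `y[0], …, y[i+T]`. -/
def Corrects {F : Type} {k n T : ℕ} (f : Encoder F k n) (g : Decoder F k n T)
    (E : Set ℕ) : Prop :=
  ∀ (s : ℕ → Fin k → F) (i : ℕ), g i (fun t => chOutput f E s t) = s i

/-- The channel `C_I(N, B)` with window length `T + 1`: in every window of `T + 1` consecutive
indices, the erasures are either contained in a single interval of `B` consecutive integers,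
or number at most `N`. -/
def ChannelI (N B T : ℕ) : Set (Set ℕ) :=
  {E | ∀ j : ℕ,
    (∃ b : ℕ, E ∩ Set.Icc j (j + T) ⊆ Set.Ico b (b + B)) ∨
    (E ∩ Set.Icc j (j + T)).ncard ≤ N}

/-- Converse bound for channel `C_I(N,B)`: any rate-`R = k/n` streaming code with delay `T`
correcting every pattern of `C_I(N,B)` satisfies `R·B + (1−R)·N ≤ (1−R)·(T+1)`, equivalently
`(R/(1−R))·B + N ≤ T+1`. -/

lemma aux_mod_eq {P m t : ℕ} (h1 : m * P ≤ t) (h2 : t < m * P + P) : t % P = t - m * P := by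
  conv_lhs => rw [show t = (t - m * P) + m * P by omega]
  rw [Nat.add_mul_mod_self_right, Nat.mod_eq_of_lt (by omega)]

lemma aux_channel (N B T W P : ℕ) (hN : 0 < N) (hNB : N ≤ B) (hBT : B ≤ T)
    (hW : W = T + 1 - N) (hP : P = W + B) :
    {t : ℕ | t % P < B} ∈ ChannelI N B T := by
  have hWpos : 0 < W := by omega
  have hPpos : 0 < P := by omega
  have hTP : T + 1 ≤ P := by omega
  intro j
  set m := j / P with hm
  have hmp : (m + 1) * P = m * P + P := by ring
  have hc1 : m * P ≤ j := by rw [hm]; exact Nat.div_mul_le_self j P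
  have hc2 : j < m * P + P := by
    have h := Nat.div_add_mod j P
    have h2 := Nat.mod_lt j hPpos
    rw [hm, Nat.mul_comm]; omega
  by_cases hA : m * P + B ≤ j
  · -- window does not touch burst m; only burst m+1 possible
    left
    refine ⟨(m + 1) * P, fun t ht => ?_⟩
    obtain ⟨htE, htl, htr⟩ := ht
    simp only [Set.mem_setOf_eq] at htE
    have h1 : m * P ≤ t := by omega
    have h2 : (m + 1) * P ≤ t := by
      by_contra hlt
      have := aux_mod_eq h1 (by omega)
      omega
    have h3 : t < (m + 1) * P + P := by omega
    have := aux_mod_eq h2 h3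
    exact Set.mem_Ico.mpr ⟨by omega, by omega⟩
  · by_cases hcase : j + T < (m + 1) * P
    · left
      refine ⟨m * P, fun t ht => ?_⟩
      obtain ⟨htE, htl, htr⟩ := ht
      simp only [Set.mem_setOf_eq] at htE
      have h1 : m * P ≤ t := le_trans hc1 htl
      have := aux_mod_eq h1 (by omega)
      exact Set.mem_Ico.mpr ⟨by omega, by omega⟩
    · right
      push_neg at hcase
      have hsub : {t : ℕ | t % P < B} ∩ Set.Icc j (j + T) ⊆
          Set.Ico j (m * P + B) ∪ Set.Ico ((m + 1) * P) (j + T + 1) := by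
        intro t ht
        obtain ⟨htE, htl, htr⟩ := ht
        simp only [Set.mem_setOf_eq] at htE
        by_cases h : t < (m + 1) * P
        · have h1 : m * P ≤ t := le_trans hc1 htl
          have := aux_mod_eq h1 (by omega)
          exact Set.mem_union_left _ (Set.mem_Ico.mpr ⟨by omega, by omega⟩)
        · exact Set.mem_union_right _ (Set.mem_Ico.mpr ⟨by omega, by omega⟩)
      calc ({t : ℕ | t % P < B} ∩ Set.Icc j (j + T)).ncard
          ≤ (Set.Ico j (m * P + B) ∪ Set.Ico ((m + 1) * P) (j + T + 1)).ncard :=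
            Set.ncard_le_ncard hsub ((Set.finite_Ico _ _).union (Set.finite_Ico _ _))
        _ ≤ (Set.Ico j (m * P + B)).ncard + (Set.Ico ((m + 1) * P) (j + T + 1)).ncard :=
            Set.ncard_union_le _ _
        _ ≤ N := by
            rw [← Finset.coe_Ico, ← Finset.coe_Ico, Set.ncard_coe_finset, Set.ncard_coe_finset,
              Nat.card_Ico, Nat.card_Ico]
            omega

/-- Extend a finite source prefix by zeros. -/
def extSeq {F : Type} [Zero F] {k : ℕ} (L : ℕ) (σ : Fin L → Fin k → F) : ℕ → Fin k → F :=
  fun t => if h : t < L then σ ⟨t, h⟩ else fun _ => 0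

lemma aux_count (F : Type) [Field F] [Fintype F] (k n T : ℕ)
    (B W P : ℕ) (hB : 0 < B) (hP : P = W + B)
    (f : Encoder F k n) (g : Decoder F k n T)
    (hcorr : Corrects f g {t : ℕ | t % P < B}) (M : ℕ) :
    k * (M * P) ≤ n * (M * W + T) := by
  set E : Set ℕ := {t : ℕ | t % P < B} with hE
  set L := M * P + T with hL
  set U : Finset ℕ := (Finset.range L).filter (fun t => ¬ t % P < B) with hU
  -- the injective map
  set Ψ : (Fin L → Fin k → F) → ((U → Fin n → F) × (Fin T → Fin k → F)) :=
    fun σ => (fun u => chInput f (extSeq L σ) u.1,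
              fun t => σ ⟨M * P + t.1, by omega⟩) with hΨ
  have hinj : Function.Injective Ψ := by
    intro σ σ' hψ
    have h1 : ∀ u : U, chInput f (extSeq L σ) u.1 = chInput f (extSeq L σ') u.1 :=
      fun u => congrFun (congrArg Prod.fst hψ) u
    have h2 : ∀ t : Fin T, σ ⟨M * P + t.1, by omega⟩ = σ' ⟨M * P + t.1, by omega⟩ :=
      fun t => congrFun (congrArg Prod.snd hψ) t
    have hout : ∀ t : ℕ, t < L →
        chOutput f E (extSeq L σ) t = chOutput f E (extSeq L σ') t := by
      intro t htL
      by_cases htE : t ∈ E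
      · simp [chOutput, htE]
      · have htE' : ¬ t % P < B := htE
        have hu : t ∈ U := Finset.mem_filter.mpr ⟨Finset.mem_range.mpr htL, htE'⟩
        simp only [chOutput, if_neg htE]
        exact congrArg some (h1 ⟨t, hu⟩)
    have hlow : ∀ i : ℕ, i < M * P → extSeq L σ i = extSeq L σ' i := by
      intro i hi
      have e1 := hcorr (extSeq L σ) i
      have e2 := hcorr (extSeq L σ') i
      have heq : (fun t : Fin (i + T + 1) => chOutput f E (extSeq L σ) t)
          = (fun t : Fin (i + T + 1) => chOutput f E (extSeq L σ') t) := by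
        funext t
        exact hout t (by have := t.2; omega)
      rw [← e1, heq, e2]
    funext x
    by_cases hx : x.1 < M * P
    · have h := hlow x.1 hx
      simpa [extSeq, x.2] using h
    · have hx2 : x.1 - M * P < T := by have := x.2; omega
      have h := h2 ⟨x.1 - M * P, hx2⟩
      have hxe : (⟨M * P + (x.1 - M * P), by omega⟩ : Fin L) = x := by
        apply Fin.ext; simp; omega
      rwa [hxe] at h
  -- cardinality comparison
  have hq : 1 < Fintype.card F := Fintype.one_lt_card
  have hcard := Fintype.card_le_of_injective Ψ hinj
  simp only [Fintype.card_prod, Fintype.card_fun, Fintype.card_fin, Fintype.card_coe] at hcard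
  have hcard2 : (Fintype.card F) ^ (k * L) ≤ (Fintype.card F) ^ (n * U.card + k * T) := by
    calc (Fintype.card F) ^ (k * L) = ((Fintype.card F) ^ k) ^ L := pow_mul _ _ _
      _ ≤ ((Fintype.card F) ^ n) ^ U.card * ((Fintype.card F) ^ k) ^ T := hcard
      _ = (Fintype.card F) ^ (n * U.card + k * T) := by
          rw [← pow_mul, ← pow_mul, ← pow_add]
  have hkL : k * L ≤ n * U.card + k * T := (Nat.pow_le_pow_iff_right hq).mp hcard2
  -- bound on |U|
  have hsplit := Finset.card_filter_add_card_filter_not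
    (s := Finset.range L) (p := fun t => t % P < B)
  have hEbig : M * B ≤ ((Finset.range L).filter (fun t => t % P < B)).card := by
    have hsubS : (Finset.range M).biUnion (fun m => Finset.Ico (m * P) (m * P + B)) ⊆
        (Finset.range L).filter (fun t => t % P < B) := by
      intro t ht
      obtain ⟨m, hm, ht⟩ := Finset.mem_biUnion.mp ht
      rw [Finset.mem_Ico] at ht
      rw [Finset.mem_range] at hm
      have hmP : m * P + P ≤ M * P := by
        have : m + 1 ≤ M := hm
        calc m * P + P = (m + 1) * P := by ring
          _ ≤ M * P := Nat.mul_le_mul_right P this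
      refine Finset.mem_filter.mpr ⟨Finset.mem_range.mpr (by omega), ?_⟩
      have := aux_mod_eq (P := P) (m := m) (t := t) (by omega) (by omega)
      simpa [this] using (by omega : t - m * P < B)
    have hcardS : ((Finset.range M).biUnion (fun m => Finset.Ico (m * P) (m * P + B))).card
        = M * B := by
      rw [Finset.card_biUnion]
      · simp only [Nat.card_Ico]
        rw [Finset.sum_congr rfl (fun m _ => by omega : ∀ m ∈ Finset.range M, m * P + B - m * P = B)]
        simp [Finset.sum_const, Finset.card_range, Nat.mul_comm]
      · have key : ∀ a b : ℕ, a < b →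
            Disjoint (Finset.Ico (a * P) (a * P + B)) (Finset.Ico (b * P) (b * P + B)) := by
          intro a b h
          refine Finset.disjoint_left.mpr fun t ht1 ht2 => ?_
          rw [Finset.mem_Ico] at ht1 ht2
          have hab2 : a * P + B ≤ b * P :=
            calc a * P + B ≤ a * P + P := by omega
              _ = (a + 1) * P := by ring
              _ ≤ b * P := Nat.mul_le_mul_right P h
          omega
        intro a _ b _ hab
        rcases Nat.lt_or_ge a b with h | h
        · exact key a b h
        · exact (key b a (by omega)).symm
    calc M * B = _ := hcardS.symm
      _ ≤ _ := Finset.card_le_card hsubS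
  have hMP : M * P = M * W + M * B := by rw [hP]; ring
  have hUcard : U.card ≤ M * W + T := by
    rw [← hU, Finset.card_range] at hsplit
    omega
  have hkMP : k * (M * P) ≤ n * U.card := by
    have hkLs : k * L = k * (M * P) + k * T := by rw [hL]; ring
    omega
  calc k * (M * P) ≤ n * U.card := hkMP
    _ ≤ n * (M * W + T) := Nat.mul_le_mul_left n hUcard

theorem stmt0 (N B T : ℕ) (hN : 0 < N) (hNB : N ≤ B) (hBT : B ≤ T)
    (F : Type) [Field F] [Fintype F] (k n : ℕ) (hk : 1 ≤ k) (hn : 0 < n)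
    (f : Encoder F k n) (g : Decoder F k n T)
    (hcorr : ∀ E ∈ ChannelI N B T, Corrects f g E) :
    ((k : ℝ) / n) * B + (1 - (k : ℝ) / n) * N ≤ (1 - (k : ℝ) / n) * (T + 1) ∧
    ((k : ℝ) / n) / (1 - (k : ℝ) / n) * B + N ≤ T + 1 := by
  set W := T + 1 - N with hW
  set P := W + B with hPdef
  have hE := aux_channel N B T W P hN hNB hBT hW hPdef
  have hcorr' := hcorr _ hE
  have hcount := fun M => aux_count F k n T B W P (by omega) hPdef f g hcorr' M
  have hkey : k * P ≤ n * W := by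
    by_contra h
    push_neg at h
    have h1 := hcount (n * T + 1)
    have h2 : (n * T + 1) * (n * W + 1) ≤ (n * T + 1) * (k * P) :=
      Nat.mul_le_mul_left _ (by omega)
    have h3 : k * ((n * T + 1) * P) = (n * T + 1) * (k * P) := by ring
    have h4 : n * ((n * T + 1) * W + T) = (n * T + 1) * (n * W) + n * T := by ring
    have h5 : (n * T + 1) * (n * W + 1) = (n * T + 1) * (n * W) + (n * T + 1) := by ring
    omega
  have hWpos : 0 < W := by omega
  have hBpos : 0 < B := by omega
  have hkn : k < n := by
    by_contra hle
    push_neg at hle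
    have h1 : k * P = k * W + k * B := by rw [hPdef]; ring
    have h2 : n * W ≤ k * W := Nat.mul_le_mul_right W hle
    have h3 : 1 * 1 ≤ k * B := Nat.mul_le_mul hk hBpos
    omega
  have hn' : (0 : ℝ) < n := by exact_mod_cast hn
  have hWr : (W : ℝ) = (T : ℝ) + 1 - N := by
    rw [hW]; rw [Nat.cast_sub (by omega : N ≤ T + 1)]; push_cast; ring
  have hkPr : (k : ℝ) * ((W : ℝ) + B) ≤ (n : ℝ) * W := by
    have h := hkey
    rw [hPdef] at h
    have hcast : ((k * (W + B) : ℕ) : ℝ) ≤ ((n * W : ℕ) : ℝ) := Nat.cast_le.mpr h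
    push_cast at hcast
    linarith
  have hRlt : (k : ℝ) / n < 1 := (div_lt_one hn').mpr (by exact_mod_cast hkn)
  have hdiv : (k : ℝ) / n * ((W : ℝ) + B) ≤ W := by
    rw [div_mul_eq_mul_div, div_le_iff₀ hn']
    nlinarith [hkPr]
  rw [hWr] at hdiv
  have h1R : (0 : ℝ) < 1 - (k : ℝ) / n := by linarith
  constructor
  · nlinarith [hdiv]
  · have hh : (k : ℝ) / n / (1 - (k : ℝ) / n) * B ≤ (T : ℝ) + 1 - N := by
      rw [div_mul_eq_mul_div, div_le_iff₀ h1R]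
      nlinarith [hdiv]
    linarith
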